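/- Let α > 2, δ = 2/α, and let B, F > 0. Define f : (0,F) → ℝ by f(x) = (2^{B/x} − 1)^δ + (2^{B/(F−x)} − 1)^δ (the symmetric-traffic case B₁ = B₂ = B). Then x = F/2 is the unique global minimizer of f on (0,F): f(F/2) < f(x) for every x ∈ (0,F) with x ≠ F/2. -/

import Mathlib

open Real

private lemma slope_exp {u v : ℝ} (hu : 0 < u) (huv : u < v) :
    u * Real.exp u * (Real.exp v - 1) ≤ v * Real.exp v * (Real.exp u - 1) := by
  have hv : 0 < v := hu.trans huv
  -- convexity of exp at points -v and 0 with weights u/v, 1-u/v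
  have hb : (0:ℝ) ≤ 1 - u / v := by
    rw [sub_nonneg]; exact (div_le_one hv).mpr huv.le
  have hkey := convexOn_exp.2 (Set.mem_univ (-v)) (Set.mem_univ (0:ℝ))
    (by positivity : (0:ℝ) ≤ u / v) hb (by ring)
  simp only [smul_eq_mul, mul_zero, add_zero, Real.exp_zero, mul_one] at hkey
  have harg : u / v * -v = -u := by field_simp
  rw [harg] at hkey
  -- hkey : exp (-u) ≤ u/v * exp (-v) + (1 - u/v)
  have hkey' : v * Real.exp (-u) ≤ u * Real.exp (-v) + (v - u) := by
    have := mul_le_mul_of_nonneg_left hkey hv.le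
    calc v * Real.exp (-u) ≤ v * (u / v * Real.exp (-v) + (1 - u / v)) := this
      _ = u * Real.exp (-v) + (v - u) := by field_simp
  have e1 : Real.exp (-u) * Real.exp (u + v) = Real.exp v := by
    rw [← Real.exp_add]; ring_nf
  have e2 : Real.exp (-v) * Real.exp (u + v) = Real.exp u := by
    rw [← Real.exp_add]; ring_nf
  have hE : (0:ℝ) < Real.exp (u + v) := Real.exp_pos _
  have e3 : Real.exp (u + v) = Real.exp u * Real.exp v := Real.exp_add u v
  have h4 := mul_le_mul_of_nonneg_right hkey' hE.le
  have h3 : v * Real.exp v ≤ u * Real.exp u + (v - u) * (Real.exp u * Real.exp v) := by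
    calc v * Real.exp v = v * Real.exp (-u) * Real.exp (u + v) := by
          rw [mul_assoc, e1]
      _ ≤ (u * Real.exp (-v) + (v - u)) * Real.exp (u + v) := h4
      _ = u * (Real.exp (-v) * Real.exp (u + v)) + (v - u) * Real.exp (u + v) := by ring
      _ = u * Real.exp u + (v - u) * (Real.exp u * Real.exp v) := by rw [e2, e3]
  nlinarith [h3]

private lemma key_ineq {u v : ℝ} (hu : 0 < u) (huv : u < v) :
    u ^ 2 * Real.exp u * (Real.exp v - 1) < v ^ 2 * Real.exp v * (Real.exp u - 1) := by
  have hv : 0 < v := hu.trans huv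
  have h1 := slope_exp hu huv
  have hEu : (1:ℝ) < Real.exp u := by
    rw [← Real.exp_zero]; exact Real.exp_lt_exp.mpr hu
  have hEv : (1:ℝ) < Real.exp v := by
    rw [← Real.exp_zero]; exact Real.exp_lt_exp.mpr hv
  have hpos : 0 < v * Real.exp v * (Real.exp u - 1) :=
    mul_pos (mul_pos hv (Real.exp_pos v)) (by linarith)
  have h2 := mul_le_mul_of_nonneg_left h1 hu.le
  have h3 := mul_lt_mul_of_pos_right huv hpos
  nlinarith [h2, h3]

/-- Symmetric traffic: with equal rate requirements `B₁ = B₂ = B`, the equal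
split `x = F/2` is the unique global minimizer of
`f(x) = (2^{B/x} − 1)^{2/α} + (2^{B/(F−x)} − 1)^{2/α}` on `(0, F)`. -/
theorem symmetric_traffic_equal_split (α : ℝ) (hα : 2 < α) (B F : ℝ)
    (hB : 0 < B) (hF : 0 < F) :
    F / 2 ∈ Set.Ioo (0 : ℝ) F ∧
    ∀ x ∈ Set.Ioo (0 : ℝ) F, x ≠ F / 2 →
      ((2 : ℝ) ^ (B / (F / 2)) - 1) ^ (2 / α) +
          ((2 : ℝ) ^ (B / (F - F / 2)) - 1) ^ (2 / α) <
        ((2 : ℝ) ^ (B / x) - 1) ^ (2 / α) + ((2 : ℝ) ^ (B / (F - x)) - 1) ^ (2 / α) := by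
  have hα0 : (0:ℝ) < α := by linarith
  have hδ : (0:ℝ) < 2 / α := by positivity
  refine ⟨⟨by linarith, by linarith⟩, ?_⟩
  intro x hx hne
  set c := B * Real.log 2 with hc
  have hc0 : 0 < c := mul_pos hB (Real.log_pos one_lt_two)
  set l : ℝ → ℝ := fun t => Real.log (Real.exp (c * t⁻¹) - 1) with hl
  have hEpos : ∀ t : ℝ, 0 < t → 0 < Real.exp (c * t⁻¹) - 1 := by
    intro t ht
    have h1 : (1:ℝ) < Real.exp (c * t⁻¹) := by
      rw [← Real.exp_zero]
      exact Real.exp_lt_exp.mpr (by positivity)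
    linarith
  -- the derivative of l
  set d : ℝ → ℝ := fun t =>
    Real.exp (c * t⁻¹) * (c * -(t ^ 2)⁻¹) / (Real.exp (c * t⁻¹) - 1) with hd
  have hderiv : ∀ t : ℝ, 0 < t → HasDerivAt l (d t) t := by
    intro t ht
    have h1 : HasDerivAt (fun y : ℝ => c * y⁻¹) (c * -(t ^ 2)⁻¹) t :=
      (hasDerivAt_inv ht.ne').const_mul c
    have h2 := (h1.exp.sub_const 1).log (by exact (hEpos t ht).ne')
    simpa [hd, hl] using h2
  -- d is strictly monotone on Ioi 0
  have hmono : StrictMonoOn d (Set.Ioi (0:ℝ)) := by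
    intro s hs t ht hst
    simp only [Set.mem_Ioi] at hs ht
    set u := c * t⁻¹ with hu
    set v := c * s⁻¹ with hv
    have hu0 : 0 < u := by positivity
    have huv : u < v := by
      apply mul_lt_mul_of_pos_left _ hc0
      exact inv_strictAnti₀ hs hst
    have hkey := key_ineq hu0 huv
    have hEu := hEpos t ht
    have hEv := hEpos s hs
    rw [show Real.exp (c * t⁻¹) = Real.exp u from rfl] at hEu
    rw [show Real.exp (c * s⁻¹) = Real.exp v from rfl] at hEv
    have hs2 : (s ^ 2)⁻¹ = v ^ 2 / c ^ 2 := by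
      rw [hv]; field_simp
    have ht2 : (t ^ 2)⁻¹ = u ^ 2 / c ^ 2 := by
      rw [hu]; field_simp
    have hds : d s = -(v ^ 2 * Real.exp v) / (c * (Real.exp v - 1)) := by
      simp only [hd, ← hv, hs2]
      field_simp
    have hdt : d t = -(u ^ 2 * Real.exp u) / (c * (Real.exp u - 1)) := by
      simp only [hd, ← hu, ht2]
      field_simp
    rw [hds, hdt, div_lt_div_iff₀ (by positivity) (by positivity)]
    nlinarith [Real.exp_pos u, Real.exp_pos v, hc0]
  -- strict convexity of l on Ioi 0
  have hconv : StrictConvexOn ℝ (Set.Ioi (0:ℝ)) l := by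
    apply StrictMonoOn.strictConvexOn_of_deriv (convex_Ioi 0)
    · intro t ht
      exact ((hderiv t ht).continuousAt).continuousWithinAt
    · rw [interior_Ioi]
      intro s hs t ht hst
      rw [(hderiv s hs).deriv, (hderiv t ht).deriv]
      exact hmono hs ht hst
  -- rewrite terms via exp/log
  have hterm : ∀ t : ℝ, 0 < t →
      ((2:ℝ) ^ (B / t) - 1) ^ (2 / α) = Real.exp (l t * (2 / α)) := by
    intro t ht
    have h2 : (2:ℝ) ^ (B / t) = Real.exp (c * t⁻¹) := by
      rw [Real.rpow_def_of_pos (by norm_num : (0:ℝ) < 2)]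
      congr 1
      rw [hc]; field_simp
    rw [h2, Real.rpow_def_of_pos (hEpos t ht)]
  obtain ⟨hx0, hxF⟩ := hx
  have hy0 : 0 < F - x := by linarith
  have hF2 : 0 < F / 2 := by linarith
  have hFsub : F - F / 2 = F / 2 := by ring
  rw [hFsub, hterm _ hF2, hterm _ hx0, hterm _ hy0]
  -- strict convexity inequality at x, F - x with midpoint F/2
  have hne' : x ≠ F - x := by
    intro h; apply hne; linarith [h]
  have hmid := hconv.2 (Set.mem_Ioi.mpr hx0) (Set.mem_Ioi.mpr hy0) hne'
    (by norm_num : (0:ℝ) < 1/2) (by norm_num : (0:ℝ) < 1/2) (by norm_num)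
  simp only [smul_eq_mul] at hmid
  have hmid' : l (F / 2) < (l x + l (F - x)) / 2 := by
    have harg : 1/2 * x + 1/2 * (F - x) = F / 2 := by ring
    rw [harg] at hmid
    linarith
  set p := l x * (2 / α) with hp
  set q := l (F - x) * (2 / α) with hq
  have h1 : Real.exp (l (F / 2) * (2 / α)) < Real.exp ((p + q) / 2) := by
    apply Real.exp_lt_exp.mpr
    rw [hp, hq]
    calc l (F / 2) * (2 / α) < (l x + l (F - x)) / 2 * (2 / α) :=
          mul_lt_mul_of_pos_right hmid' hδ
      _ = (l x * (2 / α) + l (F - x) * (2 / α)) / 2 := by ring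
  have h2 : 2 * Real.exp ((p + q) / 2) ≤ Real.exp p + Real.exp q := by
    have ha := Real.exp_pos (p / 2)
    have hb := Real.exp_pos (q / 2)
    have h3 := two_mul_le_add_sq (Real.exp (p / 2)) (Real.exp (q / 2))
    have e1 : Real.exp (p / 2) * Real.exp (q / 2) = Real.exp ((p + q) / 2) := by
      rw [← Real.exp_add]; ring_nf
    have e2 : Real.exp (p / 2) ^ 2 = Real.exp p := by
      rw [sq, ← Real.exp_add]; ring_nf
    have e3 : Real.exp (q / 2) ^ 2 = Real.exp q := by
      rw [sq, ← Real.exp_add]; ring_nf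
    nlinarith
  linarith
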